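/- arXiv:1905.12148 — 2 statements merged into one kernel-verified Lean document; each statement's English description precedes it below -/
import Mathlib

section
/- The function f is strictly increasing on [0,1]: for all x, y ∈ [0,1] with x < y one has f(x) < f(y). -/
open Filter Topology MeasureTheory

/-- Product `q_1 ⋯ q_n` of the first `n` bases (0-indexed sequence `a`). -/
noncomputable def cantorProd (a : ℕ → ℕ) (n : ℕ) : ℕ := ∏ j ∈ Finset.range n, a j

/-- The canonical Q-digit of `x` at (0-indexed) position `n`:
`ε_{n+1}(x) = ⌊q_1⋯q_{n+1} x⌋ - q_{n+1} ⌊q_1⋯q_n x⌋`. -/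
noncomputable def cantorDigit (a : ℕ → ℕ) (x : ℝ) (n : ℕ) : ℤ :=
  ⌊(cantorProd a (n + 1) : ℝ) * x⌋ - (a n : ℤ) * ⌊(cantorProd a n : ℝ) * x⌋

/-- The function `f`: for `x < 1`, `f(x) = ∑ ε_n(x)/q^n`; `f(1) = ∑ (q_n - 1)/q^n`. -/
noncomputable def cantorF (a : ℕ → ℕ) (q : ℕ) (x : ℝ) : ℝ :=
  if x < 1 then ∑' n : ℕ, (cantorDigit a x n : ℝ) / (q : ℝ) ^ (n + 1)
  else ∑' n : ℕ, ((a n : ℝ) - 1) / (q : ℝ) ^ (n + 1)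

/-- `x ∈ (0,1)` is Q-rational if it is a finite sum `∑_{i=1}^m c_i/(q_1⋯q_i)`
with digits `0 ≤ c_i ≤ q_i - 1`. -/
def QRational (a : ℕ → ℕ) (x : ℝ) : Prop :=
  x ∈ Set.Ioo (0 : ℝ) 1 ∧
    ∃ m : ℕ, 1 ≤ m ∧ ∃ c : ℕ → ℕ, (∀ i, c i < a i) ∧
      x = ∑ i ∈ Finset.range m, (c i : ℝ) / ∏ j ∈ Finset.range (i + 1), (a j : ℝ)

lemma cantorProd_succ (a : ℕ → ℕ) (n : ℕ) :
    cantorProd a (n+1) = cantorProd a n * a n := Finset.prod_range_succ _ _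

lemma two_pow_le_cantorProd (a : ℕ → ℕ) (ha2 : ∀ n, 2 ≤ a n) (n : ℕ) :
    2 ^ n ≤ cantorProd a n := by
  induction n with
  | zero => simp [cantorProd]
  | succ n ih => rw [cantorProd_succ, pow_succ]; exact Nat.mul_le_mul ih (ha2 n)

lemma cantorProd_mul (a : ℕ → ℕ) (x : ℝ) (n : ℕ) :
    (cantorProd a (n+1) : ℝ) * x = (a n : ℝ) * ((cantorProd a n : ℝ) * x) := by
  rw [cantorProd_succ]; push_cast; ring

lemma cantorDigit_nonneg (a : ℕ → ℕ) (x : ℝ) (n : ℕ) : 0 ≤ cantorDigit a x n := by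
  unfold cantorDigit
  rw [cantorProd_mul]
  have h1 : ((a n : ℤ) * ⌊(cantorProd a n : ℝ) * x⌋ : ℤ)
      ≤ ⌊(a n : ℝ) * ((cantorProd a n : ℝ) * x)⌋ := by
    apply Int.le_floor.mpr
    push_cast
    exact mul_le_mul_of_nonneg_left (Int.floor_le _) (by positivity)
  omega

lemma cantorDigit_lt (a : ℕ → ℕ) (ha2 : ∀ n, 2 ≤ a n) (x : ℝ) (n : ℕ) :
    cantorDigit a x n < (a n : ℤ) := by
  unfold cantorDigit
  rw [cantorProd_mul]
  have hpos : (0:ℝ) < (a n : ℝ) := by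
    have := ha2 n; positivity
  have h1 : ⌊(a n : ℝ) * ((cantorProd a n : ℝ) * x)⌋
      < (a n : ℤ) * ⌊(cantorProd a n : ℝ) * x⌋ + (a n : ℤ) := by
    apply Int.floor_lt.mpr
    push_cast
    have h2 := Int.lt_floor_add_one ((cantorProd a n : ℝ) * x)
    nlinarith
  omega

lemma cantor_fract_rec (a : ℕ → ℕ) (x : ℝ) (n : ℕ)
    (h : cantorDigit a x n = (a n : ℤ) - 1) :
    1 - Int.fract ((cantorProd a (n+1) : ℝ) * x)
      = (a n : ℝ) * (1 - Int.fract ((cantorProd a n : ℝ) * x)) := by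
  have hfl : (⌊(cantorProd a (n+1) : ℝ) * x⌋ : ℝ)
      = (a n : ℝ) * (⌊(cantorProd a n : ℝ) * x⌋ : ℝ) + (a n : ℝ) - 1 := by
    have h2 : ⌊(cantorProd a (n+1) : ℝ) * x⌋
        = (a n : ℤ) * ⌊(cantorProd a n : ℝ) * x⌋ + (a n : ℤ) - 1 := by
      unfold cantorDigit at h; omega
    push_cast [h2]; ring
  have hP := cantorProd_mul a x n
  rw [Int.fract, Int.fract, hfl, hP]
  ring

lemma exists_small_digit (a : ℕ → ℕ) (ha2 : ∀ n, 2 ≤ a n) (x : ℝ) (N : ℕ) :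
    ∃ n, N ≤ n ∧ cantorDigit a x n < (a n : ℤ) - 1 := by
  by_contra hc
  push_neg at hc
  have hall : ∀ n, N ≤ n → cantorDigit a x n = (a n : ℤ) - 1 := fun n hn => by
    have h1 := cantorDigit_lt a ha2 x n
    have h2 := hc n hn
    omega
  set g : ℕ → ℝ := fun m => Int.fract ((cantorProd a m : ℝ) * x) with hg
  have hlt1 : ∀ m, g m < 1 := fun m => Int.fract_lt_one _
  have hnn : ∀ m, 0 ≤ g m := fun m => Int.fract_nonneg _
  have key : ∀ k, 2 ^ k * (1 - g N) ≤ 1 - g (N + k) := by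
    intro k
    induction k with
    | zero => simp
    | succ k ih =>
      have hrec := cantor_fract_rec a x (N + k) (hall _ (Nat.le_add_right _ _))
      have h2 : (2:ℝ) ≤ (a (N+k) : ℝ) := by exact_mod_cast ha2 (N+k)
      have hnn' : (0:ℝ) ≤ 1 - g (N+k) := by linarith [hlt1 (N+k)]
      have heq : (N + (k+1)) = (N + k) + 1 := by omega
      rw [heq]
      calc 2 ^ (k+1) * (1 - g N) = 2 * (2 ^ k * (1 - g N)) := by ring
        _ ≤ 2 * (1 - g (N+k)) := by linarith
        _ ≤ (a (N+k) : ℝ) * (1 - g (N+k)) := by nlinarith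
        _ = 1 - g ((N+k)+1) := hrec.symm
  have hpos : 0 < 1 - g N := by linarith [hlt1 N]
  obtain ⟨k, hk⟩ := pow_unbounded_of_one_lt (1 / (1 - g N)) (by norm_num : (1:ℝ) < 2)
  have h1 : 1 < 2 ^ k * (1 - g N) := by
    rw [div_lt_iff₀ hpos] at hk; linarith
  have h2 := key k
  have h3 := hnn (N + k)
  linarith

lemma geo_term (q : ℕ) (hq : 2 ≤ q) (N : ℕ) (k : ℕ) :
    ((q:ℝ)-1) / (q:ℝ)^(k + N + 1) = (((q:ℝ)-1)/(q:ℝ)^(N+1)) * (1/(q:ℝ))^k := by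
  have hq0 : (0:ℝ) < q := by positivity
  rw [div_pow, one_pow, show k + N + 1 = (N+1) + k by ring, pow_add]
  field_simp

lemma geo_summable (q : ℕ) (hq : 2 ≤ q) (N : ℕ) :
    Summable (fun k : ℕ => ((q:ℝ)-1) / (q:ℝ)^(k + N + 1)) := by
  have hq0 : (0:ℝ) < q := by positivity
  have hq1 : (1:ℝ) < q := by exact_mod_cast hq.trans_lt' one_lt_two
  simp only [geo_term q hq N]
  exact Summable.mul_left _ (summable_geometric_of_lt_one (by positivity)
    (by rw [div_lt_one hq0]; exact hq1))

lemma geo_tsum (q : ℕ) (hq : 2 ≤ q) (N : ℕ) :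
    ∑' k : ℕ, ((q:ℝ)-1) / (q:ℝ)^(k + N + 1) = 1 / (q:ℝ)^N := by
  have hq0 : (0:ℝ) < q := by positivity
  have hq1 : (1:ℝ) < q := by exact_mod_cast hq.trans_lt' one_lt_two
  rw [tsum_congr (geo_term q hq N), tsum_mul_left,
    tsum_geometric_of_lt_one (by positivity) (by rw [div_lt_one hq0]; exact hq1)]
  have hne : (q:ℝ) - 1 ≠ 0 := by linarith
  have hqne : (q:ℝ) ≠ 0 := by linarith
  have h1 : (1 - 1/(q:ℝ)) = ((q:ℝ)-1)/q := by field_simp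
  rw [h1, inv_div, pow_succ]
  field_simp

lemma summable_digitF (a : ℕ → ℕ) (ha2 : ∀ n, 2 ≤ a n) (q : ℕ) (hq : 2 ≤ q)
    (haq : ∀ n, a n ≤ q) (x : ℝ) :
    Summable (fun n : ℕ => (cantorDigit a x n : ℝ) / (q:ℝ)^(n+1)) := by
  have hq0 : (0:ℝ) < q := by positivity
  have hq1 : (1:ℝ) < q := by exact_mod_cast hq.trans_lt' one_lt_two
  apply Summable.of_nonneg_of_le (f := fun n : ℕ => (1/(q:ℝ))^n)
  · intro n
    have h1 := cantorDigit_nonneg a x n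
    have h2 : (0:ℝ) ≤ (cantorDigit a x n : ℝ) := by exact_mod_cast h1
    positivity
  · intro n
    have h1 : (cantorDigit a x n : ℝ) ≤ (q:ℝ) := by
      have h2 : cantorDigit a x n ≤ (q:ℤ) := by
        have := cantorDigit_lt a ha2 x n; have := haq n; omega
      exact_mod_cast h2
    have h3 : ((1:ℝ)/q)^n = (q:ℝ) / (q:ℝ)^(n+1) := by
      rw [div_pow, one_pow, pow_succ]
      field_simp
    rw [h3]
    gcongr
  · exact summable_geometric_of_lt_one (by positivity) (by rw [div_lt_one hq0]; exact hq1)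

lemma summable_maxF (a : ℕ → ℕ) (ha2 : ∀ n, 2 ≤ a n) (q : ℕ) (hq : 2 ≤ q)
    (haq : ∀ n, a n ≤ q) :
    Summable (fun n : ℕ => ((a n : ℝ) - 1) / (q:ℝ)^(n+1)) := by
  have hq0 : (0:ℝ) < q := by positivity
  have hq1 : (1:ℝ) < q := by exact_mod_cast hq.trans_lt' one_lt_two
  apply Summable.of_nonneg_of_le (f := fun n : ℕ => (1/(q:ℝ))^n)
  · intro n
    have h2 : (2:ℝ) ≤ (a n : ℝ) := by exact_mod_cast ha2 n
    apply div_nonneg (by linarith) (by positivity)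
  · intro n
    have h1 : ((a n : ℝ)) - 1 ≤ (q:ℝ) := by
      have h2 : (a n : ℝ) ≤ (q:ℝ) := by exact_mod_cast haq n
      linarith
    have h3 : ((1:ℝ)/q)^n = (q:ℝ) / (q:ℝ)^(n+1) := by
      rw [div_pow, one_pow, pow_succ]; field_simp
    rw [h3]; gcongr
  · exact summable_geometric_of_lt_one (by positivity) (by rw [div_lt_one hq0]; exact hq1)

lemma tail_lt (a : ℕ → ℕ) (ha2 : ∀ n, 2 ≤ a n) (q : ℕ) (hq : 2 ≤ q)
    (haq : ∀ n, a n ≤ q) (x : ℝ) (N : ℕ) :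
    ∑' k : ℕ, (cantorDigit a x (k + N) : ℝ) / (q:ℝ)^(k + N + 1) < 1 / (q:ℝ)^N := by
  have hq0 : (0:ℝ) < q := by positivity
  obtain ⟨n₀, hn₀, hsmall⟩ := exists_small_digit a ha2 x N
  have hkey : ∀ k : ℕ, (cantorDigit a x (k + N) : ℝ) / (q:ℝ)^(k + N + 1)
      ≤ ((q:ℝ)-1) / (q:ℝ)^(k + N + 1) := by
    intro k
    have h1 : cantorDigit a x (k+N) ≤ (q:ℤ) - 1 := by
      have := cantorDigit_lt a ha2 x (k+N); have := haq (k+N); omega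
    have h2 : (cantorDigit a x (k+N) : ℝ) ≤ (q:ℝ) - 1 := by exact_mod_cast h1
    gcongr
  have hstrict : (cantorDigit a x ((n₀ - N) + N) : ℝ) / (q:ℝ)^((n₀-N) + N + 1)
      < ((q:ℝ)-1) / (q:ℝ)^((n₀-N) + N + 1) := by
    have he : (n₀ - N) + N = n₀ := by omega
    rw [he]
    have h1 : cantorDigit a x n₀ < (q:ℤ) - 1 := by have := haq n₀; omega
    have h2 : (cantorDigit a x n₀ : ℝ) < (q:ℝ) - 1 := by exact_mod_cast h1
    gcongr
  have hs1 : Summable (fun k : ℕ => (cantorDigit a x (k + N) : ℝ) / (q:ℝ)^(k + N + 1)) := by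
    exact (summable_nat_add_iff
      (f := fun n : ℕ => (cantorDigit a x n : ℝ) / (q:ℝ)^(n+1)) N).mpr
      (summable_digitF a ha2 q hq haq x)
  calc ∑' k : ℕ, (cantorDigit a x (k + N) : ℝ) / (q:ℝ)^(k + N + 1)
      < ∑' k : ℕ, ((q:ℝ)-1) / (q:ℝ)^(k + N + 1) :=
        Summable.tsum_lt_tsum hkey hstrict hs1 (geo_summable q hq N)
    _ = 1 / (q:ℝ)^N := geo_tsum q hq N

/-- `f` is strictly increasing on `[0,1]`. -/
theorem stmt5 (q : ℕ) (hq : 2 ≤ q) (a : ℕ → ℕ) (ha : ∀ n, 2 ≤ a n ∧ a n ≤ q) :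
    StrictMonoOn (cantorF a q) (Set.Icc (0 : ℝ) 1) := by
  classical
  have ha2 : ∀ n, 2 ≤ a n := fun n => (ha n).1
  have haq : ∀ n, a n ≤ q := fun n => (ha n).2
  have hq0 : (0:ℝ) < q := by positivity
  intro x hx y hy hxy
  have hx1 : x < 1 := lt_of_lt_of_le hxy hy.2
  have hfx : cantorF a q x = ∑' n : ℕ, (cantorDigit a x n : ℝ) / (q:ℝ)^(n+1) := if_pos hx1
  rcases eq_or_lt_of_le hy.2 with hy1 | hy1
  · -- y = 1
    have hfy : cantorF a q y = ∑' n : ℕ, ((a n : ℝ) - 1) / (q:ℝ)^(n+1) := by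
      rw [cantorF, if_neg (by rw [hy1]; exact lt_irrefl 1)]
    rw [hfx, hfy]
    obtain ⟨n₀, -, hsm⟩ := exists_small_digit a ha2 x 0
    apply Summable.tsum_lt_tsum (i := n₀)
    · intro n
      have h1 : cantorDigit a x n ≤ (a n : ℤ) - 1 := by
        have := cantorDigit_lt a ha2 x n; omega
      have h2 : (cantorDigit a x n : ℝ) ≤ (a n : ℝ) - 1 := by
        exact_mod_cast h1
      have hp : (0:ℝ) < (q:ℝ)^(n+1) := by positivity
      exact (div_le_div_iff_of_pos_right hp).mpr h2
    · have h2 : (cantorDigit a x n₀ : ℝ) < (a n₀ : ℝ) - 1 := by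
        exact_mod_cast hsm
      have hp : (0:ℝ) < (q:ℝ)^(n₀+1) := by positivity
      exact (div_lt_div_iff_of_pos_right hp).mpr h2
    · exact summable_digitF a ha2 q hq haq x
    · exact summable_maxF a ha2 q hq haq
  · -- y < 1
    have hfy : cantorF a q y = ∑' n : ℕ, (cantorDigit a y n : ℝ) / (q:ℝ)^(n+1) := if_pos hy1
    have hx0 : (0:ℝ) ≤ x := hx.1
    have hy0 : (0:ℝ) ≤ y := hy.1
    have hPy : ∃ n, ⌊(cantorProd a n : ℝ) * x⌋ < ⌊(cantorProd a n : ℝ) * y⌋ := by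
      obtain ⟨k, hk⟩ := pow_unbounded_of_one_lt (1/(y - x)) (one_lt_two (α := ℝ))
      refine ⟨k, ?_⟩
      have hP2 : (2:ℝ)^k ≤ (cantorProd a k : ℝ) := by
        exact_mod_cast two_pow_le_cantorProd a ha2 k
      have hxy' : (0:ℝ) < y - x := by linarith
      have h1 : 1 < (cantorProd a k : ℝ) * (y - x) := by
        rw [div_lt_iff₀ hxy'] at hk
        have h2pow : (0:ℝ) < (2:ℝ)^k := by positivity
        nlinarith
      have h2 : ((⌊(cantorProd a k : ℝ) * x⌋ + 1 : ℤ) : ℝ) ≤ (cantorProd a k : ℝ) * y := by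
        push_cast
        have := Int.floor_le ((cantorProd a k : ℝ) * x)
        nlinarith
      have h3 := Int.le_floor.mpr h2
      omega
    have hN0 : ¬ (⌊(cantorProd a 0 : ℝ) * x⌋ < ⌊(cantorProd a 0 : ℝ) * y⌋) := by
      have hxf : ⌊x⌋ = 0 := Int.floor_eq_zero_iff.mpr ⟨hx0, hx1⟩
      have hyf : ⌊y⌋ = 0 := Int.floor_eq_zero_iff.mpr ⟨hy0, hy1⟩
      simp [cantorProd, hxf, hyf]
    obtain ⟨M, hMeq⟩ : ∃ M, Nat.find hPy = M + 1 :=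
      Nat.exists_eq_succ_of_ne_zero (by
        intro h
        exact hN0 (h ▸ Nat.find_spec hPy))
    have hMspec : ⌊(cantorProd a (M+1) : ℝ) * x⌋ < ⌊(cantorProd a (M+1) : ℝ) * y⌋ :=
      hMeq ▸ Nat.find_spec hPy
    have hmin : ∀ n, n ≤ M → ⌊(cantorProd a n : ℝ) * x⌋ = ⌊(cantorProd a n : ℝ) * y⌋ := by
      intro n hn
      have h1 : ¬ (⌊(cantorProd a n:ℝ)*x⌋ < ⌊(cantorProd a n:ℝ)*y⌋) :=
        Nat.find_min hPy (by rw [hMeq]; omega)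
      have h2 : ⌊(cantorProd a n:ℝ)*x⌋ ≤ ⌊(cantorProd a n:ℝ)*y⌋ := by
        apply Int.floor_le_floor
        have hP : (0:ℝ) ≤ (cantorProd a n : ℝ) := by positivity
        nlinarith
      omega
    have hdig : ∀ n, n < M → cantorDigit a y n = cantorDigit a x n := by
      intro n hn
      unfold cantorDigit
      rw [hmin n (by omega), hmin (n+1) (by omega)]
    have hgap : cantorDigit a x M + 1 ≤ cantorDigit a y M := by
      unfold cantorDigit
      rw [hmin M le_rfl]
      omega
    have hsx := summable_digitF a ha2 q hq haq x
    have hsy := summable_digitF a ha2 q hq haq y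
    have hsplitx := hsx.sum_add_tsum_nat_add (M+1)
    have hsplity := hsy.sum_add_tsum_nat_add (M+1)
    have htailx : ∑' k : ℕ, (cantorDigit a x (k + (M+1)) : ℝ) / (q:ℝ)^(k + (M+1) + 1)
        < 1/(q:ℝ)^(M+1) := tail_lt a ha2 q hq haq x (M+1)
    have htaily : (0:ℝ) ≤ ∑' k : ℕ, (cantorDigit a y (k + (M+1)) : ℝ) / (q:ℝ)^(k + (M+1) + 1) := by
      apply tsum_nonneg
      intro k
      have h1 : (0:ℝ) ≤ (cantorDigit a y (k+(M+1)) : ℝ) := by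
        exact_mod_cast cantorDigit_nonneg a y (k+(M+1))
      positivity
    have hsumy : ∑ n ∈ Finset.range (M+1), (cantorDigit a y n : ℝ)/(q:ℝ)^(n+1)
        = ∑ n ∈ Finset.range M, (cantorDigit a x n : ℝ)/(q:ℝ)^(n+1)
          + (cantorDigit a y M : ℝ)/(q:ℝ)^(M+1) := by
      rw [Finset.sum_range_succ]
      congr 1
      apply Finset.sum_congr rfl
      intro n hn
      rw [hdig n (Finset.mem_range.mp hn)]
    have hsumx : ∑ n ∈ Finset.range (M+1), (cantorDigit a x n : ℝ)/(q:ℝ)^(n+1)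
        = ∑ n ∈ Finset.range M, (cantorDigit a x n : ℝ)/(q:ℝ)^(n+1)
          + (cantorDigit a x M : ℝ)/(q:ℝ)^(M+1) := Finset.sum_range_succ _ _
    have hstep : (cantorDigit a x M : ℝ)/(q:ℝ)^(M+1) + 1/(q:ℝ)^(M+1)
        ≤ (cantorDigit a y M : ℝ)/(q:ℝ)^(M+1) := by
      rw [← add_div]
      have h1 : (cantorDigit a x M : ℝ) + 1 ≤ (cantorDigit a y M : ℝ) := by
        exact_mod_cast hgap
      gcongr
    rw [hfx, hfy, ← hsplitx, ← hsplity]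
    linarith [htailx, htaily, hsumx, hsumy, hstep]
end

section
/- The Lebesgue integral of f over [0,1] equals (1/2)·Σ_{n=1}^∞ (q_n − 1)/q^n; consequently 1/(2(q−1)) ≤ ∫_{[0,1]} f dλ ≤ 1/2. -/
open Filter Topology MeasureTheory

lemma fract_intInt (t₁ t₂ : ℝ) : IntervalIntegrable Int.fract volume t₁ t₂ := by
  apply IntervalIntegrable.mono_fun' (g := fun _ => (1:ℝ)) intervalIntegrable_const
    measurable_fract.aestronglyMeasurable
  filter_upwards with x
  rw [Real.norm_eq_abs, abs_of_nonneg (Int.fract_nonneg x)]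
  exact (Int.fract_lt_one x).le

lemma integral_fract01 : ∫ x in (0:ℝ)..1, Int.fract x = 1/2 := by
  rw [intervalIntegral.integral_of_le zero_le_one,
    setIntegral_congr_set Ico_ae_eq_Ioc.symm,
    setIntegral_congr_fun (g := fun x => x) measurableSet_Ico
      (fun x hx => Int.fract_eq_self.2 ⟨hx.1, hx.2⟩),
    ← setIntegral_congr_set Ico_ae_eq_Ioc.symm,
    ← intervalIntegral.integral_of_le zero_le_one, integral_id]
  norm_num

lemma floor_integral (N : ℕ) (hN : 0 < N) :
    ∫ x in (0:ℝ)..1, ((⌊(N:ℝ)*x⌋ : ℤ) : ℝ) = ((N:ℝ)-1)/2 := by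
  have hNR : (0:ℝ) < N := by exact_mod_cast hN
  have hfr : ∀ x : ℝ, ((⌊(N:ℝ)*x⌋ : ℤ) : ℝ) = (N:ℝ)*x - Int.fract ((N:ℝ)*x) := by
    intro x; rw [Int.self_sub_fract]
  simp_rw [hfr]
  have h1 : IntervalIntegrable (fun x : ℝ => (N:ℝ)*x) volume 0 1 :=
    (continuous_const.mul continuous_id).intervalIntegrable 0 1
  have h2 : IntervalIntegrable (fun x : ℝ => Int.fract ((N:ℝ)*x)) volume 0 1 := by
    apply IntervalIntegrable.mono_fun' (g := fun _ => (1:ℝ)) intervalIntegrable_const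
      (measurable_fract.comp (measurable_const_mul _)).aestronglyMeasurable
    filter_upwards with x
    rw [Real.norm_eq_abs, abs_of_nonneg (Int.fract_nonneg _)]
    exact (Int.fract_lt_one _).le
  rw [intervalIntegral.integral_sub h1 h2]
  have e1 : ∫ x in (0:ℝ)..1, (N:ℝ)*x = (N:ℝ)/2 := by
    rw [intervalIntegral.integral_const_mul, integral_id]; ring
  have e2 : ∫ x in (0:ℝ)..1, Int.fract ((N:ℝ)*x) = 1/2 := by
    rw [intervalIntegral.integral_comp_mul_left Int.fract (ne_of_gt hNR)]
    have := (Int.fract_periodic ℝ).intervalIntegral_add_zsmul_eq (N:ℤ) 0 fract_intInt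
    simp only [zero_add, zsmul_eq_mul, Int.cast_natCast, mul_one] at this
    rw [mul_zero, mul_one, this, integral_fract01, smul_eq_mul]
    field_simp
  rw [e1, e2]; ring

lemma digit_bounds {m : ℕ} (hm : 0 < m) (y : ℝ) :
    0 ≤ ⌊(m:ℝ)*y⌋ - (m:ℤ) * ⌊y⌋ ∧ ⌊(m:ℝ)*y⌋ - (m:ℤ) * ⌊y⌋ ≤ (m:ℤ) - 1 := by
  have hmR : (0:ℝ) < m := by exact_mod_cast hm
  constructor
  · have : ((m:ℤ) * ⌊y⌋ : ℤ) ≤ ⌊(m:ℝ)*y⌋ := by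
      apply Int.le_floor.2
      push_cast
      exact mul_le_mul_of_nonneg_left (Int.floor_le y) hmR.le
    omega
  · have : ⌊(m:ℝ)*y⌋ < (m:ℤ) * ⌊y⌋ + m := by
      apply Int.floor_lt.2
      push_cast
      have := Int.lt_floor_add_one y
      nlinarith [Int.floor_le y]
    omega

lemma cantorProd_pos (a : ℕ → ℕ) (ha : ∀ n, 0 < a n) (n : ℕ) :
    0 < cantorProd a n :=
  Finset.prod_pos fun j _ => ha j

lemma floor_intInt (N : ℕ) : IntervalIntegrable
    (fun x : ℝ => ((⌊(N:ℝ)*x⌋ : ℤ) : ℝ)) volume 0 1 := by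
  apply IntervalIntegrable.mono_fun' (g := fun _ => (N:ℝ)) intervalIntegrable_const
  · exact (Measurable.comp measurable_from_top
      (measurable_const_mul _).floor).aestronglyMeasurable
  · rw [Set.uIoc_of_le zero_le_one]
    filter_upwards [ae_restrict_mem measurableSet_Ioc] with x hx
    have hx0 : (0:ℝ) ≤ (N:ℝ)*x := mul_nonneg (Nat.cast_nonneg N) hx.1.le
    rw [Real.norm_eq_abs, abs_of_nonneg]
    · have h1 : ((⌊(N:ℝ)*x⌋ : ℤ) : ℝ) ≤ (N:ℝ)*x := Int.floor_le _
      have h2 : (N:ℝ)*x ≤ N := by nlinarith [hx.2]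
      linarith
    · exact_mod_cast Int.floor_nonneg.2 hx0

lemma cantorProd_succ_cast (a : ℕ → ℕ) (n : ℕ) :
    (cantorProd a (n+1) : ℝ) = (cantorProd a n : ℝ) * (a n : ℝ) := by
  rw [cantorProd, cantorProd, Finset.prod_range_succ]; push_cast; ring

lemma digit_integral (a : ℕ → ℕ) (ha : ∀ n, 2 ≤ a n) (n : ℕ) :
    ∫ x in Set.Icc (0:ℝ) 1, (cantorDigit a x n : ℝ) = ((a n : ℝ) - 1)/2 := by
  have hpos : ∀ j, 0 < a j := fun j => lt_of_lt_of_le two_pos (ha j)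
  have hP : 0 < cantorProd a n := cantorProd_pos a hpos n
  have hP1 : 0 < cantorProd a (n+1) := cantorProd_pos a hpos (n+1)
  rw [← setIntegral_congr_set Ioc_ae_eq_Icc, ← intervalIntegral.integral_of_le zero_le_one]
  unfold cantorDigit
  simp only [Int.cast_sub, Int.cast_mul, Int.cast_natCast]
  rw [intervalIntegral.integral_sub (floor_intInt _) ((floor_intInt _).const_mul _),
    intervalIntegral.integral_const_mul, floor_integral _ hP1, floor_integral _ hP]
  rw [cantorProd_succ_cast]
  have hPR : (1:ℝ) ≤ (cantorProd a n : ℝ) := by exact_mod_cast hP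
  ring

/-- `∫_{[0,1]} f dλ = (1/2) ∑_{n≥1} (q_n - 1)/q^n`, and consequently
`1/(2(q-1)) ≤ ∫_{[0,1]} f dλ ≤ 1/2`. -/
theorem stmt8 (q : ℕ) (hq : 2 ≤ q) (a : ℕ → ℕ) (ha : ∀ n, 2 ≤ a n ∧ a n ≤ q) :
    (∫ x in Set.Icc (0 : ℝ) 1, cantorF a q x)
      = (1 / 2) * ∑' n : ℕ, ((a n : ℝ) - 1) / (q : ℝ) ^ (n + 1) ∧
    1 / (2 * ((q : ℝ) - 1)) ≤ (∫ x in Set.Icc (0 : ℝ) 1, cantorF a q x) ∧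
    (∫ x in Set.Icc (0 : ℝ) 1, cantorF a q x) ≤ 1 / 2 := by
  have hq1 : (1:ℝ) < q := by exact_mod_cast lt_of_lt_of_le one_lt_two hq
  have hq0 : (0:ℝ) < q := lt_trans one_pos hq1
  have hrlt : (q:ℝ)⁻¹ < 1 := by
    rw [inv_lt_one_iff₀]; right; exact hq1
  -- pointwise bounds on digits
  have hdig : ∀ (n : ℕ) (x : ℝ), (0:ℝ) ≤ (cantorDigit a x n : ℝ) ∧
      (cantorDigit a x n : ℝ) ≤ (q:ℝ) - 1 := by
    intro n x
    have hcast : cantorDigit a x n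
        = ⌊(a n : ℝ) * ((cantorProd a n : ℝ) * x)⌋ - (a n : ℤ) * ⌊(cantorProd a n : ℝ) * x⌋ := by
      rw [cantorDigit, cantorProd_succ_cast]; ring_nf
    have h := digit_bounds (m := a n) (lt_of_lt_of_le two_pos (ha n).1)
      ((cantorProd a n : ℝ) * x)
    rw [← hcast] at h
    constructor
    · exact_mod_cast h.1
    · have h2 : (cantorDigit a x n : ℝ) ≤ (a n : ℝ) - 1 := by
        exact_mod_cast h.2
      have h3 : (a n : ℝ) ≤ (q : ℝ) := by exact_mod_cast (ha n).2
      linarith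
  -- the terms
  set g : ℕ → ℝ → ℝ := fun n x => (cantorDigit a x n : ℝ) / (q : ℝ) ^ (n + 1) with hg
  have hgbound : ∀ n x, ‖g n x‖ ≤ ((q:ℝ) - 1) / (q:ℝ) ^ (n+1) := by
    intro n x
    rw [hg, Real.norm_eq_abs, abs_div, abs_of_nonneg (hdig n x).1,
      abs_of_nonneg (by positivity : (0:ℝ) ≤ (q:ℝ)^(n+1))]
    exact div_le_div_of_nonneg_right (hdig n x).2 (by positivity) |>.trans_eq rfl
  have hgmeas : ∀ n, Measurable (g n) := by
    intro n
    apply Measurable.div_const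
    apply Measurable.comp (measurable_from_top (f := (Int.cast : ℤ → ℝ)))
    exact ((measurable_const_mul _).floor.sub
      (((measurable_const_mul _).floor).const_mul _))
  have hμIcc : volume (Set.Icc (0:ℝ) 1) < ⊤ := by
    rw [Real.volume_Icc]; exact ENNReal.ofReal_lt_top
  have hgint : ∀ n, Integrable (g n) (volume.restrict (Set.Icc (0:ℝ) 1)) := by
    intro n
    refine Integrable.mono' (g := fun _ => ((q:ℝ)-1)/(q:ℝ)^(n+1)) ?_
      (hgmeas n).aestronglyMeasurable ?_
    · exact (integrableOn_const hμIcc.ne)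
    · filter_upwards with x using hgbound n x
  -- geometric sums
  have hgeom0 : Summable (fun n : ℕ => ((q:ℝ)⁻¹)^n) :=
    summable_geometric_of_lt_one (by positivity) hrlt
  have hgeom_eq : ∀ c : ℝ, ∀ n : ℕ, (c/(q:ℝ)) * ((q:ℝ)⁻¹)^n = c / (q:ℝ)^(n+1) := by
    intro c n
    rw [pow_succ, div_eq_mul_inv, div_eq_mul_inv, mul_inv, inv_pow]
    ring
  have hgeomc : ∀ c : ℝ, Summable (fun n : ℕ => c / (q:ℝ)^(n+1)) := by
    intro c
    exact (hgeom0.mul_left (c/(q:ℝ))).congr (hgeom_eq c)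
  have hgeomc_sum : ∀ c : ℝ, ∑' n : ℕ, c / (q:ℝ)^(n+1) = c / ((q:ℝ) - 1) := by
    intro c
    rw [tsum_congr (fun n => (hgeom_eq c n).symm), tsum_mul_left,
      tsum_geometric_of_lt_one (by positivity) hrlt]
    have h2 : (q:ℝ) - 1 ≠ 0 := by linarith
    field_simp
  -- summability of integral norms
  have hnormle : ∀ n, ∫ x in Set.Icc (0:ℝ) 1, ‖g n x‖ ≤ ((q:ℝ)-1)/(q:ℝ)^(n+1) := by
    intro n
    calc ∫ x in Set.Icc (0:ℝ) 1, ‖g n x‖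
        ≤ ∫ _x in Set.Icc (0:ℝ) 1, ((q:ℝ)-1)/(q:ℝ)^(n+1) := by
          apply integral_mono (hgint n).norm (integrableOn_const hμIcc.ne)
          exact fun x => hgbound n x
      _ = ((q:ℝ)-1)/(q:ℝ)^(n+1) := by
          rw [setIntegral_const, Real.volume_real_Icc]
          norm_num
  have hsumnorm : Summable (fun n => ∫ x in Set.Icc (0:ℝ) 1, ‖g n x‖) := by
    apply Summable.of_nonneg_of_le (fun n => integral_nonneg fun x => norm_nonneg _)
      hnormle (hgeomc _)
  -- the integral equals the tsum of integrals
  have hae : ∀ᵐ x : ℝ, x ∈ Set.Icc (0:ℝ) 1 → cantorF a q x = ∑' n, g n x := by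
    have hne : ∀ᵐ x : ℝ, x ≠ (1:ℝ) := by
      rw [ae_iff]
      have : {x : ℝ | ¬ x ≠ 1} = {1} := by ext y; simp
      rw [this]
      exact measure_singleton 1
    filter_upwards [hne] with x hx hmem
    have hx1 : x < 1 := lt_of_le_of_ne hmem.2 hx
    rw [cantorF, if_pos hx1]
  have hint_eq : ∫ x in Set.Icc (0:ℝ) 1, cantorF a q x
      = ∑' n, ∫ x in Set.Icc (0:ℝ) 1, g n x := by
    rw [setIntegral_congr_ae measurableSet_Icc hae]
    exact (integral_tsum_of_summable_integral_norm hgint hsumnorm).symm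
  have hterm : ∀ n, ∫ x in Set.Icc (0:ℝ) 1, g n x
      = (1/2) * (((a n : ℝ) - 1) / (q:ℝ)^(n+1)) := by
    intro n
    rw [hg]
    simp only
    rw [integral_div, digit_integral a (fun m => (ha m).1) n]
    ring
  have hS_summ : Summable (fun n : ℕ => ((a n : ℝ) - 1) / (q:ℝ)^(n+1)) := by
    apply Summable.of_nonneg_of_le ?_ ?_ (hgeomc ((q:ℝ)-1))
    · intro n
      have : (2:ℝ) ≤ a n := by exact_mod_cast (ha n).1
      apply div_nonneg (by linarith) (by positivity)
    · intro n
      apply div_le_div_of_nonneg_right ?_ (by positivity)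
      have : (a n : ℝ) ≤ q := by exact_mod_cast (ha n).2
      linarith
  have hmain : (∫ x in Set.Icc (0 : ℝ) 1, cantorF a q x)
      = (1 / 2) * ∑' n : ℕ, ((a n : ℝ) - 1) / (q : ℝ) ^ (n + 1) := by
    rw [hint_eq, tsum_congr hterm, tsum_mul_left]
  refine ⟨hmain, ?_, ?_⟩
  · rw [hmain]
    have hlow : ∑' n : ℕ, (1:ℝ) / (q:ℝ)^(n+1)
        ≤ ∑' n : ℕ, ((a n : ℝ) - 1) / (q:ℝ)^(n+1) := by
      apply Summable.tsum_le_tsum ?_ (hgeomc 1) hS_summ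
      intro n
      apply div_le_div_of_nonneg_right ?_ (by positivity)
      have : (2:ℝ) ≤ a n := by exact_mod_cast (ha n).1
      linarith
    rw [hgeomc_sum 1] at hlow
    have e : 1/(2*((q:ℝ)-1)) = (1/2)*(1/((q:ℝ)-1)) := by
      rw [one_div, mul_inv]; ring
    rw [e]
    exact mul_le_mul_of_nonneg_left hlow (by norm_num)
  · rw [hmain]
    have hup : ∑' n : ℕ, ((a n : ℝ) - 1) / (q:ℝ)^(n+1)
        ≤ ∑' n : ℕ, ((q:ℝ)-1) / (q:ℝ)^(n+1) := by
      apply Summable.tsum_le_tsum ?_ hS_summ (hgeomc _)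
      intro n
      apply div_le_div_of_nonneg_right ?_ (by positivity)
      have : (a n : ℝ) ≤ q := by exact_mod_cast (ha n).2
      linarith
    rw [hgeomc_sum, div_self (by linarith : (q:ℝ)-1 ≠ 0)] at hup
    nlinarith
end
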